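/- Let n, m : ℕ and let C₁ : V_n → V_m → Bool and C₂ : V_n → Bool be a succinct subset-sum instance, defining s(b) = ∑_{a ∈ V_n} 2^{num(a)} · bv(C₁ a b) for each b ∈ V_m and t = ∑_{a ∈ V_n} 2^{num(a)} · bv(C₂ a). Then there exists a function g : V_n → V_m → Bool⁵, writing g a b = (α a b, β a b, γ a b, δ a b, ε a b), satisfying for all a, a' ∈ V_n and b, b' ∈ V_m: (i) α a b = α a' b; (ii) if α a b = false then γ a b = false, δ a b = false, and β a b = ε a b; (iii) if α a b = true then bv(γ a b) + bv(C₁ a b) + bv(β a b) = 2·bv(δ a b) + bv(ε a b); (iv) if num(a) = 0 then γ a b = false; (v) if num(a) = 2^n − 1 then δ a b = false; (vi) if num(b) = 0 then β a b = false and γ a b = false; (vii) if num(b) = 2^m − 1 then ε a b = C₂ a; (viii) if num(a') = num(a) + 1 then δ a b = γ a' b; (ix) if num(b') = num(b) + 1 then ε a b = β a b'; if and only if there exists a finite set X ⊆ V_m such that ∑_{b ∈ X} s(b) = t. -/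

import Mathlib

/-- `num v` is the number encoded by the boolean vector `v`. -/
def num {n : ℕ} (v : Fin n → Bool) : ℕ :=
  ∑ i : Fin n, 2 ^ (i : ℕ) * (if v i then 1 else 0)

/-- `bv x` is the numerical value of the bit `x`. -/
def bv (x : Bool) : ℕ := if x then 1 else 0

lemma bv_le_one (x : Bool) : bv x ≤ 1 := by cases x <;> simp [bv]

/-- decode a number into a boolean vector -/
def enc (n k : ℕ) : Fin n → Bool := fun i => k.testBit i

lemma num_succ {n : ℕ} (v : Fin (n+1) → Bool) :
    num v = bv (v 0) + 2 * num (fun i : Fin n => v i.succ) := by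
  unfold num
  rw [Fin.sum_univ_succ, Finset.mul_sum]
  simp only [Fin.val_zero, pow_zero, one_mul, Fin.val_succ, bv]
  congr 1
  refine Finset.sum_congr rfl fun i _ => by ring

lemma num_lt {n : ℕ} (v : Fin n → Bool) : num v < 2 ^ n := by
  induction n with
  | zero => simp [num]
  | succ n ih =>
    rw [num_succ]
    have := ih (fun i : Fin n => v i.succ)
    have := bv_le_one (v 0)
    rw [pow_succ]
    omega

lemma testBit_num {n : ℕ} (v : Fin n → Bool) (i : Fin n) :
    (num v).testBit (i : ℕ) = v i := by
  induction n with
  | zero => exact absurd i.isLt (by simp)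
  | succ n ih =>
    rw [num_succ]
    rcases Fin.eq_zero_or_eq_succ i with h | ⟨j, rfl⟩
    · subst h
      rw [Fin.val_zero, Nat.testBit_zero]
      cases v 0 <;> simp [bv, Nat.add_mul_mod_self_left]
    · rw [Fin.val_succ, Nat.testBit_succ]
      have h2 : (bv (v 0) + 2 * num fun i : Fin n => v i.succ) / 2
          = num (fun i : Fin n => v i.succ) := by
        cases v 0 <;> simp [bv] <;> omega
      rw [h2, ih (fun i : Fin n => v i.succ) j]

lemma enc_num {n : ℕ} (v : Fin n → Bool) : enc n (num v) = v := by
  funext i; exact testBit_num v i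

lemma num_enc {n k : ℕ} (h : k < 2 ^ n) : num (enc n k) = k := by
  apply Nat.eq_of_testBit_eq
  intro i
  by_cases hi : i < n
  · exact testBit_num (enc n k) ⟨i, hi⟩
  · rw [Nat.testBit_lt_two_pow, Nat.testBit_lt_two_pow]
    · exact lt_of_lt_of_le h (Nat.pow_le_pow_right (by norm_num) (by omega))
    · exact lt_of_lt_of_le (num_lt _) (Nat.pow_le_pow_right (by norm_num) (by omega))

lemma num_inj {n : ℕ} {v w : Fin n → Bool} (h : num v = num w) : v = w := by
  rw [← enc_num v, ← enc_num w, h]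

/-- `S N g` is the number with bits `g 0, ..., g (N-1)`. -/
def S (N : ℕ) (g : ℕ → Bool) : ℕ := ∑ j ∈ Finset.range N, 2 ^ j * bv (g j)

lemma S_lt (N : ℕ) (g : ℕ → Bool) : S N g < 2 ^ N := by
  induction N with
  | zero => simp [S]
  | succ N ih =>
    rw [S, Finset.sum_range_succ, ← S]
    have := bv_le_one (g N)
    rw [pow_succ]
    nlinarith [ih]

lemma S_testBit {N j : ℕ} (g : ℕ → Bool) (hj : j < N) : (S N g).testBit j = g j := by
  induction N with
  | zero => omega
  | succ N ih =>
    rw [S, Finset.sum_range_succ, ← S]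
    rcases Nat.lt_or_ge j N with h | h
    · have hlt : S N g < 2 ^ N := S_lt N g
      have hmod : (S N g + 2 ^ N * bv (g N)) % 2 ^ N = S N g % 2 ^ N := by
        simp [Nat.add_mul_mod_self_left]
      have h2 : (S N g + 2 ^ N * bv (g N)).testBit j
          = ((S N g + 2 ^ N * bv (g N)) % 2 ^ N).testBit j := by
        rw [Nat.testBit_mod_two_pow]; simp [h]
      rw [h2, hmod, Nat.mod_eq_of_lt hlt, ih h]
    · have hjN : N = j := by omega
      subst hjN
      rw [Nat.testBit_eq_decide_div_mod_eq]
      have hlt : S N g < 2 ^ N := S_lt N g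
      have hdiv : (S N g + 2 ^ N * bv (g N)) / 2 ^ N = bv (g N) := by
        rw [Nat.add_mul_div_left _ _ (Nat.pow_pos (by norm_num))]
        rw [Nat.div_eq_of_lt hlt]; omega
      rw [hdiv]
      cases g N <;> simp [bv]

lemma S_congr {N : ℕ} {g h : ℕ → Bool} (he : ∀ j < N, g j = h j) : S N g = S N h := by
  unfold S
  exact Finset.sum_congr rfl fun j hj => by rw [he j (Finset.mem_range.mp hj)]

/-- carry into position `j` when adding `X` and `Y`. -/
def cr (X Y j : ℕ) : Bool := decide (2 ^ j ≤ X % 2 ^ j + Y % 2 ^ j)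

lemma cr_zero (X Y : ℕ) : cr X Y 0 = false := by simp [cr, Nat.mod_one]

lemma cr_top {X Y N : ℕ} (h : X + Y < 2 ^ N) : cr X Y N = false := by
  simp only [cr, decide_eq_false_iff_not, not_le]
  calc X % 2 ^ N + Y % 2 ^ N ≤ X + Y := Nat.add_le_add (Nat.mod_le _ _) (Nat.mod_le _ _)
    _ < 2 ^ N := h

lemma cr_zero_left (Y j : ℕ) : cr 0 Y j = false := by
  simp only [cr, Nat.zero_mod, Nat.zero_add, decide_eq_false_iff_not, not_le]
  exact Nat.mod_lt _ (Nat.pow_pos (by norm_num))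

lemma bv_testBit (X j : ℕ) : bv (X.testBit j) = X / 2 ^ j % 2 := by
  rw [Nat.testBit_eq_decide_div_mod_eq]
  rcases Nat.mod_two_eq_zero_or_one (X / 2 ^ j) with h | h <;> simp [bv, h]

lemma cr_eq (X Y j : ℕ) :
    X % 2 ^ j + Y % 2 ^ j = (X + Y) % 2 ^ j + 2 ^ j * bv (cr X Y j) := by
  have hPpos : (0:ℕ) < 2 ^ j := Nat.pow_pos (by norm_num)
  have hx : X % 2 ^ j < 2 ^ j := Nat.mod_lt _ hPpos
  have hy : Y % 2 ^ j < 2 ^ j := Nat.mod_lt _ hPpos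
  have hZ : (X + Y) % 2 ^ j = (X % 2 ^ j + Y % 2 ^ j) % 2 ^ j := by rw [Nat.add_mod]
  by_cases h : 2 ^ j ≤ X % 2 ^ j + Y % 2 ^ j
  · have hb : bv (cr X Y j) = 1 := by simp [cr, bv, h]
    have h1 : (X % 2 ^ j + Y % 2 ^ j) % 2 ^ j = X % 2 ^ j + Y % 2 ^ j - 2 ^ j := by
      rw [Nat.mod_eq_sub_mod h]
      exact Nat.mod_eq_of_lt (by omega)
    rw [hb, hZ, h1]; omega
  · have hb : bv (cr X Y j) = 0 := by simp [cr, bv, h]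
    have h1 : (X % 2 ^ j + Y % 2 ^ j) % 2 ^ j = X % 2 ^ j + Y % 2 ^ j :=
      Nat.mod_eq_of_lt (by omega)
    rw [hb, hZ, h1]; omega

lemma cr_spec (X Y j : ℕ) :
    bv (cr X Y j) + bv (X.testBit j) + bv (Y.testBit j)
      = 2 * bv (cr X Y (j+1)) + bv ((X+Y).testBit j) := by
  have hPpos : (0:ℕ) < 2 ^ j := Nat.pow_pos (by norm_num)
  have h2 : (2:ℕ) ^ (j+1) = 2 ^ j * 2 := by rw [pow_succ]
  have hXm : X % 2 ^ (j+1) = X % 2 ^ j + 2 ^ j * (X / 2 ^ j % 2) := by rw [h2, Nat.mod_mul]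
  have hYm : Y % 2 ^ (j+1) = Y % 2 ^ j + 2 ^ j * (Y / 2 ^ j % 2) := by rw [h2, Nat.mod_mul]
  have hZm : (X+Y) % 2 ^ (j+1) = (X+Y) % 2 ^ j + 2 ^ j * ((X+Y) / 2 ^ j % 2) := by
    rw [h2, Nat.mod_mul]
  have e1 := cr_eq X Y j
  have e2 := cr_eq X Y (j+1)
  rw [bv_testBit, bv_testBit, bv_testBit]
  set P := (2:ℕ) ^ j with hP
  set c := bv (cr X Y j) with hc
  set c' := bv (cr X Y (j+1)) with hc'
  set xb := X / P % 2
  set yb := Y / P % 2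
  set zb := (X + Y) / P % 2
  have key : P * (c + xb + yb) + (X+Y) % P = P * (2 * c' + zb) + (X+Y) % P := by
    calc P * (c + xb + yb) + (X+Y) % P
        = ((X+Y) % P + P * c) + P * xb + P * yb := by ring
      _ = (X % P + Y % P) + P * xb + P * yb := by rw [← e1]
      _ = (X % P + P * xb) + (Y % P + P * yb) := by ring
      _ = X % 2 ^ (j+1) + Y % 2 ^ (j+1) := by rw [hXm, hYm]
      _ = (X+Y) % 2 ^ (j+1) + 2 ^ (j+1) * c' := e2
      _ = ((X+Y) % P + P * zb) + (P * 2) * c' := by rw [hZm, h2]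
      _ = P * (2 * c' + zb) + (X+Y) % P := by ring
  exact Nat.eq_of_mul_eq_mul_left hPpos (Nat.add_right_cancel key)

lemma ripple (N : ℕ) (x y e c : ℕ → Bool) (h0 : c 0 = false) (hN : c N = false)
    (hstep : ∀ j < N, bv (c j) + bv (x j) + bv (y j) = 2 * bv (c (j+1)) + bv (e j)) :
    S N x + S N y = S N e := by
  have aux : ∀ k, k ≤ N → S k x + S k y = S k e + 2 ^ k * bv (c k) := by
    intro k hk
    induction k with
    | zero => simp [S, h0, bv]
    | succ k ih =>
      have hkN : k < N := by omega
      have ihk := ih (by omega)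
      have hs := hstep k hkN
      simp only [S, Finset.sum_range_succ] at *
      have h2 : (2:ℕ) ^ (k+1) = 2 ^ k * 2 := by rw [pow_succ]
      have hs2 : 2 ^ k * (bv (c k) + bv (x k) + bv (y k))
          = 2 ^ k * (2 * bv (c (k+1)) + bv (e k)) := by rw [hs]
      rw [h2]
      linarith [ihk, hs2]
  have := aux N le_rfl
  rw [hN] at this
  simpa [bv] using this

lemma sum_S {n : ℕ} (f : (Fin n → Bool) → Bool) :
    ∑ a : Fin n → Bool, 2 ^ num a * bv (f a) = S (2 ^ n) (fun j => f (enc n j)) := by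
  unfold S
  refine Finset.sum_nbij' (fun a => num a) (fun j => enc n j) ?_ ?_ ?_ ?_ ?_
  · intro a _; exact Finset.mem_range.mpr (num_lt a)
  · intro j _; exact Finset.mem_univ _
  · intro a _; exact enc_num a
  · intro j hj; exact num_enc (Finset.mem_range.mp hj)
  · intro a _; simp only []; rw [enc_num a]

lemma filter_succ {m : ℕ} (X : Finset (Fin m → Bool)) (b : Fin m → Bool) :
    X.filter (fun b' => num b' < num b + 1)
      = if b ∈ X then insert b (X.filter fun b' => num b' < num b)
        else X.filter fun b' => num b' < num b := by
  ext b'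
  by_cases hb : b ∈ X
  · simp only [hb, if_true, Finset.mem_insert, Finset.mem_filter]
    constructor
    · rintro ⟨hX, hlt⟩
      rcases Nat.lt_or_ge (num b') (num b) with h | h
      · exact Or.inr ⟨hX, h⟩
      · exact Or.inl (num_inj (by omega))
    · rintro (rfl | ⟨hX, hlt⟩)
      · exact ⟨hb, by omega⟩
      · exact ⟨hX, by omega⟩
  · simp only [hb, if_false, Finset.mem_filter]
    constructor
    · rintro ⟨hX, hlt⟩
      rcases Nat.lt_or_ge (num b') (num b) with h | h
      · exact ⟨hX, h⟩
      · exact absurd (num_inj (show num b' = num b by omega) ▸ hX) hb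
    · rintro ⟨hX, hlt⟩
      exact ⟨hX, by omega⟩
lemma S_false (N : ℕ) : S N (fun _ => false) = 0 := by simp [S, bv]

/-- partial sums of the selected numbers, in order of `num`. -/
def QQ {n m : ℕ} (C₁ : (Fin n → Bool) → (Fin m → Bool) → Bool)
    (X : Finset (Fin m → Bool)) (k : ℕ) : ℕ :=
  ∑ b ∈ X.filter (fun b' => num b' < k), S (2 ^ n) (fun j => C₁ (enc n j) b)

lemma QQ_zero {n m : ℕ} (C₁ : (Fin n → Bool) → (Fin m → Bool) → Bool)
    (X : Finset (Fin m → Bool)) : QQ C₁ X 0 = 0 := by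
  unfold QQ
  rw [Finset.filter_false_of_mem (fun b _ => by omega)]
  simp

lemma QQ_succ {n m : ℕ} (C₁ : (Fin n → Bool) → (Fin m → Bool) → Bool)
    (X : Finset (Fin m → Bool)) (b : Fin m → Bool) :
    QQ C₁ X (num b + 1)
      = QQ C₁ X (num b) + (if b ∈ X then S (2 ^ n) (fun j => C₁ (enc n j) b) else 0) := by
  unfold QQ
  rw [filter_succ]
  by_cases hb : b ∈ X
  · rw [if_pos hb, if_pos hb, Finset.sum_insert (by simp [Finset.mem_filter])]
    omega
  · rw [if_neg hb, if_neg hb, Nat.add_zero]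

lemma QQ_full {n m : ℕ} (C₁ : (Fin n → Bool) → (Fin m → Bool) → Bool)
    (X : Finset (Fin m → Bool)) :
    QQ C₁ X (2 ^ m) = ∑ b ∈ X, S (2 ^ n) (fun j => C₁ (enc n j) b) := by
  unfold QQ
  rw [Finset.filter_true_of_mem (fun b _ => num_lt b)]

lemma QQ_le {n m : ℕ} (C₁ : (Fin n → Bool) → (Fin m → Bool) → Bool)
    (X : Finset (Fin m → Bool)) (k : ℕ) :
    QQ C₁ X k ≤ ∑ b ∈ X, S (2 ^ n) (fun j => C₁ (enc n j) b) :=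
  Finset.sum_le_sum_of_subset (Finset.filter_subset _ _)
theorem stmt_6 (n m : ℕ)
    (C₁ : (Fin n → Bool) → (Fin m → Bool) → Bool)
    (C₂ : (Fin n → Bool) → Bool) :
    (∃ α β γ δ ε : (Fin n → Bool) → (Fin m → Bool) → Bool,
        ∀ (a a' : Fin n → Bool) (b b' : Fin m → Bool),
          (α a b = α a' b) ∧
          (α a b = false → γ a b = false ∧ δ a b = false ∧ β a b = ε a b) ∧
          (α a b = true → bv (γ a b) + bv (C₁ a b) + bv (β a b)
              = 2 * bv (δ a b) + bv (ε a b)) ∧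
          (num a = 0 → γ a b = false) ∧
          (num a = 2 ^ n - 1 → δ a b = false) ∧
          (num b = 0 → β a b = false ∧ γ a b = false) ∧
          (num b = 2 ^ m - 1 → ε a b = C₂ a) ∧
          (num a' = num a + 1 → δ a b = γ a' b) ∧
          (num b' = num b + 1 → ε a b = β a b'))
      ↔
    (∃ X : Finset (Fin m → Bool),
        (∑ b ∈ X, ∑ a : Fin n → Bool, 2 ^ num a * bv (C₁ a b))
          = ∑ a : Fin n → Bool, 2 ^ num a * bv (C₂ a)) := by
  classical
  have hbitC₁ : ∀ (a : Fin n → Bool) (b : Fin m → Bool),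
      (S (2 ^ n) (fun j => C₁ (enc n j) b)).testBit (num a) = C₁ a b := by
    intro a b
    rw [S_testBit _ (num_lt a), enc_num]
  have hbitC₂ : ∀ (a : Fin n → Bool),
      (S (2 ^ n) (fun j => C₂ (enc n j))).testBit (num a) = C₂ a := by
    intro a
    rw [S_testBit _ (num_lt a), enc_num]
  constructor
  · -- certificate → subset sum
    rintro ⟨α, β, γ, δ, ε, h⟩
    set X : Finset (Fin m → Bool) := Finset.univ.filter (fun b => α (enc n 0) b = true)
      with hXdef
    have hmemX : ∀ b, b ∈ X ↔ α (enc n 0) b = true := by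
      intro b; simp [hXdef]
    have hpow_n : 0 < 2 ^ n := Nat.pow_pos (by norm_num)
    have hpow_m : 0 < 2 ^ m := Nat.pow_pos (by norm_num)
    have step : ∀ b : Fin m → Bool,
        QQ C₁ X (num b) = S (2 ^ n) (fun j => β (enc n j) b) →
        QQ C₁ X (num b + 1) = S (2 ^ n) (fun j => ε (enc n j) b) := by
      intro b HB
      rw [QQ_succ]
      by_cases hb : b ∈ X
      · have hα : ∀ a : Fin n → Bool, α a b = true := by
          intro a
          rw [(h a (enc n 0) b b).1]
          exact (hmemX b).mp hb
        have hc0 : (if 0 < 2 ^ n then γ (enc n 0) b else false) = false := by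
          rw [if_pos hpow_n]
          exact (h (enc n 0) (enc n 0) b b).2.2.2.1 (num_enc hpow_n)
        have hcN : (if 2 ^ n < 2 ^ n then γ (enc n (2 ^ n)) b else false) = false :=
          if_neg (lt_irrefl _)
        have hstep : ∀ j, j < 2 ^ n →
            bv (if j < 2 ^ n then γ (enc n j) b else false) + bv (C₁ (enc n j) b)
                + bv (β (enc n j) b)
              = 2 * bv (if j + 1 < 2 ^ n then γ (enc n (j + 1)) b else false)
                + bv (ε (enc n j) b) := by
          intro j hj
          rw [if_pos hj]
          have hδ : δ (enc n j) b
              = (if j + 1 < 2 ^ n then γ (enc n (j + 1)) b else false) := by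
            by_cases hj1 : j + 1 < 2 ^ n
            · rw [if_pos hj1]
              exact (h (enc n j) (enc n (j + 1)) b b).2.2.2.2.2.2.2.1
                (by rw [num_enc hj1, num_enc hj])
            · rw [if_neg hj1]
              exact (h (enc n j) (enc n j) b b).2.2.2.2.1 (by rw [num_enc hj]; omega)
          rw [← hδ]
          exact (h (enc n j) (enc n j) b b).2.2.1 (hα _)
        have key := ripple (2 ^ n) (fun j => C₁ (enc n j) b) (fun j => β (enc n j) b)
            (fun j => ε (enc n j) b) (fun j => if j < 2 ^ n then γ (enc n j) b else false)
            hc0 hcN hstep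
        rw [if_pos hb, HB]
        omega
      · have hα : ∀ a : Fin n → Bool, α a b = false := by
          intro a
          rw [(h a (enc n 0) b b).1]
          cases hα0 : α (enc n 0) b
          · rfl
          · exact absurd ((hmemX b).mpr hα0) hb
        rw [if_neg hb, Nat.add_zero, HB]
        exact S_congr fun j hj => ((h (enc n j) (enc n j) b b).2.1 (hα _)).2.2
    have main : ∀ k, k < 2 ^ m → QQ C₁ X k = S (2 ^ n) (fun j => β (enc n j) (enc m k)) := by
      intro k
      induction k with
      | zero =>
        intro hk
        rw [QQ_zero]
        have hall : ∀ j, j < 2 ^ n → β (enc n j) (enc m 0) = false := fun j hj =>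
          ((h (enc n j) (enc n j) (enc m 0) (enc m 0)).2.2.2.2.2.1 (num_enc hpow_m)).1
        rw [S_congr hall, S_false]
      | succ k ih =>
        intro hk
        have hk' : k < 2 ^ m := by omega
        have HB := ih (by omega)
        have HE := step (enc m k) (by rw [num_enc hk']; exact HB)
        rw [num_enc hk'] at HE
        rw [HE]
        refine S_congr fun j hj => ?_
        exact (h (enc n j) (enc n j) (enc m k) (enc m (k + 1))).2.2.2.2.2.2.2.2
          (by rw [num_enc hk, num_enc hk'])
    have hm1 : 2 ^ m - 1 < 2 ^ m := by omega
    have HB := main (2 ^ m - 1) hm1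
    have HE := step (enc m (2 ^ m - 1)) (by rw [num_enc hm1]; exact HB)
    rw [num_enc hm1] at HE
    have h2m : 2 ^ m - 1 + 1 = 2 ^ m := by omega
    rw [h2m] at HE
    have h7 : ∀ j, j < 2 ^ n → ε (enc n j) (enc m (2 ^ m - 1)) = C₂ (enc n j) := fun j hj =>
      (h (enc n j) (enc n j) (enc m (2 ^ m - 1)) (enc m (2 ^ m - 1))).2.2.2.2.2.2.1
        (num_enc hm1)
    rw [S_congr h7] at HE
    refine ⟨X, ?_⟩
    calc ∑ b ∈ X, ∑ a : Fin n → Bool, 2 ^ num a * bv (C₁ a b)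
        = ∑ b ∈ X, S (2 ^ n) (fun j => C₁ (enc n j) b) :=
          Finset.sum_congr rfl fun b _ => sum_S (fun a => C₁ a b)
      _ = QQ C₁ X (2 ^ m) := (QQ_full C₁ X).symm
      _ = S (2 ^ n) (fun j => C₂ (enc n j)) := HE
      _ = ∑ a : Fin n → Bool, 2 ^ num a * bv (C₂ a) := (sum_S C₂).symm
  · -- subset sum → certificate
    rintro ⟨X, hX⟩
    -- translate hX into S language
    have hXt : ∑ b ∈ X, S (2 ^ n) (fun j => C₁ (enc n j) b)
        = S (2 ^ n) (fun j => C₂ (enc n j)) := by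
      rw [← sum_S, ← hX]
      exact Finset.sum_congr rfl fun b _ => (sum_S (fun a => C₁ a b)).symm
    have hPle : ∀ k, QQ C₁ X k < 2 ^ 2 ^ n := fun k =>
      lt_of_le_of_lt (le_trans (QQ_le C₁ X k) (le_of_eq hXt)) (S_lt _ _)
    refine ⟨fun a b => decide (b ∈ X),
        fun a b => (QQ C₁ X (num b)).testBit (num a),
        fun a b => if b ∈ X then cr (QQ C₁ X (num b)) (S (2 ^ n) (fun j => C₁ (enc n j) b)) (num a) else false,
        fun a b => if b ∈ X then cr (QQ C₁ X (num b)) (S (2 ^ n) (fun j => C₁ (enc n j) b)) (num a + 1) else false,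
        fun a b => (QQ C₁ X (num b + 1)).testBit (num a),
        ?_⟩
    intro a a' b b'
    beta_reduce
    refine ⟨rfl, ?_, ?_, ?_, ?_, ?_, ?_, ?_, ?_⟩
    · -- (ii)
      intro hα
      have hb : b ∉ X := by simpa using hα
      refine ⟨if_neg hb, if_neg hb, ?_⟩
      rw [QQ_succ, if_neg hb, Nat.add_zero]
    · -- (iii)
      intro hα
      have hb : b ∈ X := by simpa using hα
      rw [if_pos hb, if_pos hb, QQ_succ, if_pos hb, ← hbitC₁ a b]
      have := cr_spec (QQ C₁ X (num b)) (S (2 ^ n) (fun j => C₁ (enc n j) b)) (num a)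
      omega
    · -- (iv)
      intro ha
      rw [ha]
      by_cases hb : b ∈ X <;> simp [hb, cr_zero]
    · -- (v)
      intro ha
      rw [ha]
      by_cases hb : b ∈ X
      · rw [if_pos hb]
        have h1 : 2 ^ n - 1 + 1 = 2 ^ n := by
          have := Nat.one_le_two_pow (n := n); omega
        rw [h1]
        apply cr_top
        have := hPle (num b + 1)
        rw [QQ_succ, if_pos hb] at this
        exact this
      · rw [if_neg hb]
    · -- (vi)
      intro hb0
      rw [hb0, QQ_zero]
      refine ⟨Nat.zero_testBit _, ?_⟩
      by_cases hb : b ∈ X <;> simp [hb, cr_zero_left]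
    · -- (vii)
      intro hb1
      rw [hb1]
      have h1 : 2 ^ m - 1 + 1 = 2 ^ m := by
        have := Nat.one_le_two_pow (n := m); omega
      rw [h1, QQ_full, hXt]
      exact hbitC₂ a
    · -- (viii)
      intro ha'
      rw [ha']
    · -- (ix)
      intro hb'
      rw [hb']
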